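/- Let γ_t ~ NB(t, p_h) (trials until t-th success) and β_1, β_2, … be i.i.d. Bernoulli(p') variables, all independent. Then P{ Σ_{i=1}^{t+γ_t} β_i ≤ (t/(4p_h))·p' } ≤ exp(−t p_h/6) + exp(−t p'²/(2p_h)) ≤ 2·exp(−t p'²/(6 p_h)). -/

import Mathlib

open MeasureTheory ProbabilityTheory Real

/-- PMF of the negative binomial distribution: `negBinomPMF t p k` is the probability that the
number of Bernoulli(p) trials needed to obtain the `t`-th success equals `k`. -/
noncomputable def negBinomPMF (t : ℕ) (p : ℝ) (k : ℕ) : ℝ :=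
  if t ≤ k then (Nat.choose (k - 1) (t - 1) : ℝ) * p ^ t * (1 - p) ^ (k - t) else 0

section CnbtAux

open Finset

private lemma exp34_le : Real.exp (3/4) ≤ 2.12 := by
  have h : Real.exp (3/4) ^ 4 ≤ 2.12 ^ 4 := by
    have h2 : Real.exp (3/4) ^ 4 = Real.exp 1 ^ 3 := by
      rw [← Real.exp_nat_mul, ← Real.exp_nat_mul]; norm_num
    rw [h2]
    calc Real.exp 1 ^ 3 ≤ 2.7182818286 ^ 3 := by gcongr; exact Real.exp_one_lt_d9.le
    _ ≤ 2.12 ^ 4 := by norm_num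
  exact le_of_pow_le_pow_left₀ (by norm_num) (by norm_num) h


private lemma log3_le : Real.log 3 ≤ 4/3 := by
  rw [Real.log_le_iff_le_exp (by norm_num)]
  have h49 : (1 + 4/9 : ℝ) ≤ Real.exp (4/9) := by linarith [Real.add_one_le_exp (4/9 : ℝ)]
  calc (3:ℝ) ≤ (1 + 4/9)^3 := by norm_num
  _ ≤ Real.exp (4/9) ^ 3 := by gcongr
  _ = Real.exp (4/3) := by rw [← Real.exp_nat_mul]; norm_num


private lemma core (p : ℝ) (hp : 0 < p) (hp2 : p ≤ 1/2) :
    p * Real.exp (3/4 - 3*p/2) ≤ Real.exp (-p/6) * (1 - (1-p) * Real.exp (-(3*p/2))) := by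
  have hA : (1 + p/3 : ℝ) ≤ Real.exp (p/3) := by linarith [Real.add_one_le_exp (p/3)]
  have hB : (1 + 3*p/4 : ℝ) ≤ Real.exp (3*p/4) := by linarith [Real.add_one_le_exp (3*p/4)]
  have hA4 : (1 + p/3)^4 ≤ Real.exp (4*p/3) := by
    calc (1 + p/3)^4 ≤ Real.exp (p/3) ^ 4 := by gcongr
    _ = Real.exp (4*p/3) := by rw [← Real.exp_nat_mul]; ring_nf
  have hB2 : (1 + 3*p/4)^2 ≤ Real.exp (3*p/2) := by
    calc (1 + 3*p/4)^2 ≤ Real.exp (3*p/4) ^ 2 := by gcongr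
    _ = Real.exp (3*p/2) := by rw [← Real.exp_nat_mul]; ring_nf
  have hpos1 : (0:ℝ) < (1 + p/3)^4 := by positivity
  have hpos2 : (0:ℝ) < (1 + 3*p/4)^2 := by positivity
  have key : p * Real.exp (3/4 - 4*p/3) + (1-p) * Real.exp (-(3*p/2)) ≤ 1 := by
    have e1 : p * Real.exp (3/4 - 4*p/3) ≤ p * (2.12 / (1+p/3)^4) := by
      apply mul_le_mul_of_nonneg_left _ hp.le
      rw [Real.exp_sub]
      exact div_le_div₀ (by norm_num) exp34_le (by positivity) hA4
    have e2 : (1-p) * Real.exp (-(3*p/2)) ≤ (1-p) * (1 / (1+3*p/4)^2) := by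
      apply mul_le_mul_of_nonneg_left _ (by linarith)
      rw [Real.exp_neg, one_div]
      exact inv_anti₀ hpos2 hB2
    have e3 : p * (2.12 / (1+p/3)^4) + (1-p) * (1 / (1+3*p/4)^2) ≤ 1 := by
      rw [mul_div_assoc' , mul_div_assoc', div_add_div _ _ (ne_of_gt hpos1) (ne_of_gt hpos2),
        div_le_one (by positivity)]
      nlinarith [sq_nonneg p, sq_nonneg (1-p), hp.le, hp2, sq_nonneg (p*(1-2*p))]
    linarith
  have hexpnn : (0:ℝ) < Real.exp (-p/6) := Real.exp_pos _
  have hsplit : Real.exp (3/4 - 3*p/2) = Real.exp (3/4 - 4*p/3) * Real.exp (-p/6) := by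
    rw [← Real.exp_add]; ring_nf
  rw [hsplit]
  calc p * (Real.exp (3/4 - 4*p/3) * Real.exp (-p/6))
      = Real.exp (-p/6) * (p * Real.exp (3/4 - 4*p/3)) := by ring
  _ ≤ Real.exp (-p/6) * (1 - (1-p) * Real.exp (-(3*p/2))) := by
      apply mul_le_mul_of_nonneg_left (by linarith) hexpnn.le

private lemma negBinomPMF_nonneg (t : ℕ) (p : ℝ) (hp0 : 0 ≤ p) (hp1 : p ≤ 1) (k : ℕ) :
    0 ≤ negBinomPMF t p k := by
  unfold negBinomPMF
  split
  · have : (0:ℝ) ≤ 1 - p := by linarith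
    positivity
  · exact le_refl 0


private lemma nb_tail (t : ℕ) (ht : 1 ≤ t) (p : ℝ) (hp : 0 < p) (hp1 : p ≤ 1) :
    ∑ k ∈ Finset.range (Nat.floor ((t:ℝ)/(2*p)) + 1), negBinomPMF t p k
      ≤ Real.exp (-((t:ℝ)*p)/6) := by
  set n := Nat.floor ((t:ℝ)/(2*p)) with hn
  have hnle : (n:ℝ) ≤ (t:ℝ)/(2*p) := Nat.floor_le (by positivity)
  by_cases hnt : n < t
  · have hzero : ∀ k ∈ range (n+1), negBinomPMF t p k = 0 := by
      intro k hk
      rw [mem_range] at hk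
      rw [negBinomPMF, if_neg (by omega)]
    rw [Finset.sum_eq_zero hzero]
    positivity
  push_neg at hnt
  have htR : (1:ℝ) ≤ (t:ℝ) := by exact_mod_cast ht
  have hp2 : p ≤ 1/2 := by
    have h1 : (t:ℝ) ≤ (t:ℝ)/(2*p) := le_trans (by exact_mod_cast hnt) hnle
    rw [le_div_iff₀ (by positivity)] at h1
    nlinarith
  set x := Real.exp (-(3*p/2)) with hx
  have hx0 : (0:ℝ) < x := Real.exp_pos _
  have hx1 : x < 1 := Real.exp_lt_one_iff.mpr (by linarith)
  set q := 1 - p with hq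
  have hq0 : (0:ℝ) ≤ q := by rw [hq]; linarith
  have hqx1 : q * x < 1 := by nlinarith
  have hqxpos : (0:ℝ) < 1 - q * x := by linarith
  -- Step A
  have stepA : ∑ k ∈ range (n+1), negBinomPMF t p k
      ≤ x⁻¹ ^ n * ∑ k ∈ range (n+1), negBinomPMF t p k * x ^ k := by
    rw [Finset.mul_sum]
    apply Finset.sum_le_sum
    intro k hk
    rw [mem_range] at hk
    have hkx : x ^ n ≤ x ^ k := pow_le_pow_of_le_one hx0.le hx1.le (by omega)
    have h1 : (1:ℝ) ≤ x⁻¹ ^ n * x ^ k := by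
      rw [inv_pow, ← div_eq_inv_mul]
      exact (one_le_div (pow_pos hx0 n)).mpr hkx
    have hnn := negBinomPMF_nonneg t p hp.le hp1 k
    calc negBinomPMF t p k = negBinomPMF t p k * 1 := (mul_one _).symm
    _ ≤ negBinomPMF t p k * (x⁻¹ ^ n * x ^ k) := by
        exact mul_le_mul_of_nonneg_left h1 hnn
    _ = x⁻¹ ^ n * (negBinomPMF t p k * x ^ k) := by ring
  -- Step B
  have stepB : ∑ k ∈ range (n+1), negBinomPMF t p k * x ^ k
      ≤ p ^ t * x ^ t * (1 / (1 - q*x) ^ t) := by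
    have hsub : ∑ k ∈ range (n+1), negBinomPMF t p k * x ^ k
        = ∑ k ∈ Finset.Ico t (n+1), negBinomPMF t p k * x ^ k := by
      apply (Finset.sum_subset _ _).symm
      · intro k hk; rw [Finset.mem_Ico] at hk; rw [mem_range]; omega
      · intro k hk hk2
        rw [mem_range] at hk; rw [Finset.mem_Ico] at hk2
        rw [negBinomPMF, if_neg (by omega), zero_mul]
    rw [hsub, Finset.sum_Ico_eq_sum_range]
    have hterm : ∀ j, negBinomPMF t p (t + j) * x ^ (t + j)
        = (p ^ t * x ^ t) * ((Nat.choose (j + (t-1)) (t-1) : ℝ) * (q*x) ^ j) := by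
      intro j
      rw [negBinomPMF, if_pos (by omega)]
      have h1 : t + j - 1 = j + (t - 1) := by omega
      have h2 : t + j - t = j := by omega
      rw [h1, h2, pow_add, mul_pow]
      ring
    calc ∑ j ∈ range (n + 1 - t), negBinomPMF t p (t + j) * x ^ (t + j)
        = ∑ j ∈ range (n + 1 - t), (p ^ t * x ^ t) *
            ((Nat.choose (j + (t-1)) (t-1) : ℝ) * (q*x) ^ j) := by
          exact Finset.sum_congr rfl fun j _ => hterm j
    _ = (p ^ t * x ^ t) * ∑ j ∈ range (n + 1 - t),
            ((Nat.choose (j + (t-1)) (t-1) : ℝ) * (q*x) ^ j) := by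
          rw [Finset.mul_sum]
    _ ≤ (p ^ t * x ^ t) * (1 / (1 - q*x) ^ t) := by
        apply mul_le_mul_of_nonneg_left _ (by positivity)
        have hnorm : ‖q * x‖ < 1 := by
          rw [Real.norm_eq_abs, abs_of_nonneg (by positivity)]; exact hqx1
        have hsummable := summable_choose_mul_geometric_of_norm_lt_one (t-1) hnorm
        have htsum := tsum_choose_mul_geometric_of_norm_lt_one (t-1) hnorm
        have hle := Summable.sum_le_tsum (range (n + 1 - t))
          (fun j _ => by positivity) hsummable
        rw [htsum] at hle
        have ht1 : t - 1 + 1 = t := by omega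
        rw [ht1] at hle
        exact hle
  -- Step C
  have hxinvn : x⁻¹ ^ n ≤ Real.exp (3/4) ^ t := by
    have h1 : x⁻¹ = Real.exp (3*p/2) := by rw [hx, ← Real.exp_neg, neg_neg]
    rw [h1, ← Real.exp_nat_mul, ← Real.exp_nat_mul]
    apply Real.exp_le_exp.mpr
    have : (n:ℝ) * (3*p/2) ≤ ((t:ℝ)/(2*p)) * (3*p/2) := by
      apply mul_le_mul_of_nonneg_right hnle (by positivity)
    calc (n:ℝ) * (3*p/2) ≤ ((t:ℝ)/(2*p)) * (3*p/2) := this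
    _ = (t:ℝ) * (3/4) := by field_simp; ring
  have hbase : Real.exp (3/4) * (p * x) / (1 - q*x) ≤ Real.exp (-p/6) := by
    rw [div_le_iff₀ hqxpos]
    have hc := core p hp hp2
    calc Real.exp (3/4) * (p * x) = p * Real.exp (3/4 - 3*p/2) := by
          rw [hx, show (3:ℝ)/4 - 3*p/2 = 3/4 + -(3*p/2) by ring, Real.exp_add]; ring
    _ ≤ Real.exp (-p/6) * (1 - (1-p) * Real.exp (-(3*p/2))) := hc
    _ = Real.exp (-p/6) * (1 - q*x) := by rw [hq, hx]
  have hfin : x⁻¹ ^ n * (p ^ t * x ^ t * (1 / (1 - q*x) ^ t))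
      ≤ Real.exp (-((t:ℝ)*p)/6) := by
    calc x⁻¹ ^ n * (p ^ t * x ^ t * (1 / (1 - q*x) ^ t))
        ≤ Real.exp (3/4) ^ t * (p ^ t * x ^ t * (1 / (1 - q*x) ^ t)) := by
          apply mul_le_mul_of_nonneg_right hxinvn (by positivity)
    _ = (Real.exp (3/4) * (p * x) / (1 - q*x)) ^ t := by
          rw [div_pow, mul_pow, mul_pow]; field_simp
    _ ≤ Real.exp (-p/6) ^ t := by
          apply pow_le_pow_left₀ (by positivity) hbase
    _ = Real.exp (-((t:ℝ)*p)/6) := by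
          rw [← Real.exp_nat_mul]; ring_nf
  calc ∑ k ∈ range (n+1), negBinomPMF t p k
      ≤ x⁻¹ ^ n * ∑ k ∈ range (n+1), negBinomPMF t p k * x ^ k := stepA
  _ ≤ x⁻¹ ^ n * (p ^ t * x ^ t * (1 / (1 - q*x) ^ t)) := by
      apply mul_le_mul_of_nonneg_left stepB (by positivity)
  _ ≤ Real.exp (-((t:ℝ)*p)/6) := hfin

variable {Ω : Type*} [MeasurableSpace Ω]

private lemma indep_sub {μ : Measure Ω} {γ : Ω → ℕ} {β : ℕ → Ω → ℕ}
    (hindep : iIndepFun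
        (fun o => Option.elim o γ (fun i => β i)) μ) :
    iIndepFun β μ := by
  rw [iIndepFun_iff_measure_inter_preimage_eq_mul] at *
  intro S sets hsets
  have h := hindep (S.map ⟨some, Option.some_injective ℕ⟩)
    (sets := fun o => Option.elim o Set.univ (fun i => sets i))
    (fun o _ => by cases o <;> exact trivial)
  rw [Finset.prod_map] at h
  convert h using 2
  ext ω
  simp [Finset.mem_map]
  rfl

private lemma bern_tail (μ : Measure Ω) [IsProbabilityMeasure μ] (p' : ℝ) (hp'0 : 0 < p') (hp'1 : p' ≤ 1)
    (β : ℕ → Ω → ℕ) (hβmeas : ∀ i, Measurable (β i)) (hβval : ∀ i ω, β i ω ≤ 1)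
    (hβ : ∀ i, μ {ω | β i ω = 1} = ENNReal.ofReal p')
    (hβindep : iIndepFun β μ)
    (M : ℕ) (c : ℝ) :
    (μ {ω | (∑ i ∈ Finset.range M, ((β i ω : ℝ))) ≤ c}).toReal
      ≤ Real.exp (c * Real.log 3) * (1 - 2*p'/3) ^ M := by
  set θ : ℝ := -Real.log 3 with hθ
  have hθle : θ ≤ 0 := neg_nonpos.mpr (Real.log_nonneg (by norm_num))
  set X : ℕ → Ω → ℝ := fun i ω => (β i ω : ℝ) with hX
  have hXmeas : ∀ i, Measurable (X i) := fun i => Measurable.comp measurable_from_top (hβmeas i)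
  have hXnonneg : ∀ i ω, 0 ≤ X i ω := fun i ω => Nat.cast_nonneg _
  have hXle : ∀ i ω, X i ω ≤ 1 := fun i ω => by
    have := hβval i ω
    simp only [hX]
    exact_mod_cast this
  have hXindep : iIndepFun X μ :=
    hβindep.comp (fun _ => (Nat.cast : ℕ → ℝ)) (fun _ => measurable_from_top)
  -- per-variable mgf
  have hpointwise : ∀ i ω, Real.exp (θ * X i ω) = 1 + (Real.exp θ - 1) * X i ω := by
    intro i ω
    rcases Nat.le_one_iff_eq_zero_or_eq_one.mp (hβval i ω) with h | h <;>
      simp [hX, h]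
  have hXint : ∀ i, Integrable (X i) μ := by
    intro i
    refine Integrable.mono' (integrable_const 1) (hXmeas i).aestronglyMeasurable ?_
    exact ae_of_all _ fun ω => by
      rw [Real.norm_eq_abs, abs_of_nonneg (hXnonneg i ω)]; exact hXle i ω
  have hXintegral : ∀ i, ∫ ω, X i ω ∂μ = p' := by
    intro i
    have hXi_eq : X i = Set.indicator {ω | β i ω = 1} (fun _ => (1:ℝ)) := by
      funext ω
      rcases Nat.le_one_iff_eq_zero_or_eq_one.mp (hβval i ω) with h | h <;>
        simp [hX, h, Set.indicator_apply]
    have hset : MeasurableSet {ω | β i ω = 1} := (hβmeas i) (measurableSet_singleton 1)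
    rw [hXi_eq, integral_indicator_const _ hset, measureReal_def, hβ i, smul_eq_mul,
      ENNReal.toReal_ofReal hp'0.le, mul_one]
  have hmgf : ∀ i, mgf (X i) μ θ = 1 - 2*p'/3 := by
    intro i
    have hexpθ : Real.exp θ = 1/3 := by
      rw [hθ, Real.exp_neg, Real.exp_log (by norm_num)]
      norm_num
    calc mgf (X i) μ θ = ∫ ω, Real.exp (θ * X i ω) ∂μ := rfl
    _ = ∫ ω, (1 + (Real.exp θ - 1) * X i ω) ∂μ :=
        integral_congr_ae (ae_of_all _ fun ω => hpointwise i ω)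
    _ = 1 + (Real.exp θ - 1) * p' := by
        rw [integral_add (integrable_const 1) ((hXint i).const_mul _)]
        rw [integral_const, measureReal_def, measure_univ, ENNReal.toReal_one, smul_eq_mul, mul_one,
          integral_const_mul, hXintegral i]
    _ = 1 - 2*p'/3 := by rw [hexpθ]; ring
  -- Chernoff
  set S : Ω → ℝ := ∑ i ∈ Finset.range M, X i with hS
  have hSmeas : Measurable S := by
    have : Measurable fun ω => ∑ i ∈ Finset.range M, X i ω :=
      Finset.measurable_sum _ fun i _ => hXmeas i
    convert this using 1
    funext ω
    rw [hS]; simp [Finset.sum_apply]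
  have hSapp : ∀ ω, S ω = ∑ i ∈ Finset.range M, X i ω := fun ω => by
    rw [hS]; simp [Finset.sum_apply]
  have hSint : Integrable (fun ω => Real.exp (θ * S ω)) μ := by
    refine Integrable.mono' (integrable_const 1) ?_ ?_
    · exact ((hSmeas.const_mul θ).exp).aestronglyMeasurable
    · refine ae_of_all _ fun ω => ?_
      rw [Real.norm_eq_abs, abs_of_nonneg (Real.exp_pos _).le]
      apply Real.exp_le_one_iff.mpr
      apply mul_nonpos_of_nonpos_of_nonneg hθle
      rw [hSapp ω]
      exact Finset.sum_nonneg fun i _ => hXnonneg i ω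
  have hcher := measure_le_le_exp_mul_mgf (X := S) (μ := μ) c hθle hSint
  have hmgfS : mgf S μ θ = (1 - 2*p'/3) ^ M := by
    rw [hS, hXindep.mgf_sum hXmeas (Finset.range M)]
    rw [Finset.prod_congr rfl fun i _ => hmgf i, Finset.prod_const, Finset.card_range]
  have hsetEq : {ω | S ω ≤ c} = {ω | (∑ i ∈ Finset.range M, ((β i ω : ℝ))) ≤ c} := by
    ext ω; rw [Set.mem_setOf_eq, Set.mem_setOf_eq, hSapp ω]
  rw [hsetEq, hmgfS] at hcher
  calc (μ {ω | (∑ i ∈ Finset.range M, ((β i ω : ℝ))) ≤ c}).toReal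
      ≤ Real.exp (-θ * c) * (1 - 2*p'/3) ^ M := hcher
  _ = Real.exp (c * Real.log 3) * (1 - 2*p'/3) ^ M := by
      rw [hθ]; ring_nf

end CnbtAux

/-- If `γ_t ~ NB(t, p_h)` and `β_1, β_2, …` are i.i.d. Bernoulli(p') variables, all jointly
independent, then
`P{Σ_{i=1}^{t+γ_t} β_i ≤ (t/(4p_h))p'} ≤ exp(-tp_h/6) + exp(-tp'²/(2p_h))
  ≤ 2·exp(-tp'²/(6p_h))`. -/
theorem compound_negBinom_bernoulli_tail {Ω : Type*} [MeasurableSpace Ω]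
    (μ : Measure Ω) [IsProbabilityMeasure μ]
    (t : ℕ) (ht : 1 ≤ t) (p_h p' : ℝ)
    (hph : 0 < p_h) (hph1 : p_h ≤ 1) (hp' : 0 < p') (hp'ph : p' ≤ p_h)
    (γ : Ω → ℕ) (β : ℕ → Ω → ℕ)
    (hγmeas : Measurable γ) (hβmeas : ∀ i, Measurable (β i))
    (hγ : ∀ k, μ {ω | γ ω = k} = ENNReal.ofReal (negBinomPMF t p_h k))
    (hβval : ∀ i ω, β i ω ≤ 1)
    (hβ : ∀ i, μ {ω | β i ω = 1} = ENNReal.ofReal p')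
    (hindep : iIndepFun
        (fun o => Option.elim o γ (fun i => β i)) μ) :
    μ {ω | (∑ i ∈ Finset.range (t + γ ω), (β i ω : ℝ)) ≤ (t : ℝ) * p' / (4 * p_h)}
        ≤ ENNReal.ofReal (Real.exp (-((t : ℝ) * p_h) / 6)
            + Real.exp (-((t : ℝ) * p' ^ 2) / (2 * p_h)))
      ∧ Real.exp (-((t : ℝ) * p_h) / 6) + Real.exp (-((t : ℝ) * p' ^ 2) / (2 * p_h))
        ≤ 2 * Real.exp (-((t : ℝ) * p' ^ 2) / (6 * p_h)) := by
  have htR : (1:ℝ) ≤ (t:ℝ) := by exact_mod_cast ht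
  have hp'1 : p' ≤ 1 := hp'ph.trans hph1
  constructor
  · -- main bound
    set n : ℕ := Nat.floor ((t:ℝ)/(2*p_h)) with hn
    set M : ℕ := t + n + 1 with hM
    set c : ℝ := (t : ℝ) * p' / (4 * p_h) with hc
    have hc0 : 0 ≤ c := by positivity
    set A : Set Ω := {ω | γ ω ≤ n} with hA
    set B : Set Ω := {ω | (∑ i ∈ Finset.range M, ((β i ω : ℝ))) ≤ c} with hB
    -- event inclusion
    have hsub : {ω | (∑ i ∈ Finset.range (t + γ ω), (β i ω : ℝ)) ≤ c} ⊆ A ∪ B := by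
      intro ω hω
      rw [Set.mem_setOf_eq] at hω
      by_cases hγn : γ ω ≤ n
      · exact Or.inl hγn
      · refine Or.inr ?_
        rw [hB, Set.mem_setOf_eq]
        refine le_trans ?_ hω
        apply Finset.sum_le_sum_of_subset_of_nonneg
        · apply Finset.range_subset_range.mpr; omega
        · intro i _ _; positivity
    -- bound on A
    have hAbound : μ A ≤ ENNReal.ofReal (Real.exp (-((t : ℝ) * p_h) / 6)) := by
      have hAeq : A = ⋃ k ∈ Finset.range (n+1), {ω | γ ω = k} := by
        ext ω
        simp [hA, Nat.lt_succ_iff]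
      have hdisj : (↑(Finset.range (n+1)) : Set ℕ).PairwiseDisjoint
          (fun k => {ω | γ ω = k}) := by
        intro i _ j _ hij
        apply Set.disjoint_left.mpr
        intro ω h1 h2
        exact hij (by rw [← h1, ← h2])
      have hmeas : ∀ k ∈ Finset.range (n+1), MeasurableSet {ω | γ ω = k} :=
        fun k _ => hγmeas (measurableSet_singleton k)
      rw [hAeq, measure_biUnion_finset hdisj hmeas]
      have : ∀ k ∈ Finset.range (n+1), μ {ω | γ ω = k}
          = ENNReal.ofReal (negBinomPMF t p_h k) := fun k _ => hγ k
      rw [Finset.sum_congr rfl this,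
        ← ENNReal.ofReal_sum_of_nonneg (fun k _ => negBinomPMF_nonneg t p_h hph.le hph1 k)]
      exact ENNReal.ofReal_le_ofReal (nb_tail t ht p_h hph hph1)
    -- bound on B
    have hBbound : μ B ≤ ENNReal.ofReal (Real.exp (-((t : ℝ) * p' ^ 2) / (2 * p_h))) := by
      rw [ENNReal.le_ofReal_iff_toReal_le (measure_ne_top μ B) (Real.exp_pos _).le]
      have h1 := bern_tail μ p' hp' hp'1 β hβmeas hβval hβ (indep_sub hindep) M c
      refine h1.trans ?_
      -- real exponent arithmetic
      have hbase0 : (0:ℝ) ≤ 1 - 2*p'/3 := by linarith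
      have hbase : (1 - 2*p'/3) ≤ Real.exp (-(2*p'/3)) := by
        linarith [Real.add_one_le_exp (-(2*p'/3))]
      have hpow : (1 - 2*p'/3) ^ M ≤ Real.exp (-(2*p'/3) * M) := by
        calc (1 - 2*p'/3) ^ M ≤ Real.exp (-(2*p'/3)) ^ M := pow_le_pow_left₀ hbase0 hbase M
        _ = Real.exp (-(2*p'/3) * M) := by rw [← Real.exp_nat_mul]; ring_nf
      calc Real.exp (c * Real.log 3) * (1 - 2*p'/3) ^ M
          ≤ Real.exp (c * Real.log 3) * Real.exp (-(2*p'/3) * M) := by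
            exact mul_le_mul_of_nonneg_left hpow (Real.exp_pos _).le
      _ = Real.exp (c * Real.log 3 + -(2*p'/3) * M) := by rw [← Real.exp_add]
      _ ≤ Real.exp (-((t : ℝ) * p' ^ 2) / (2 * p_h)) := by
          apply Real.exp_le_exp.mpr
          have hMge : (t:ℝ) + (t:ℝ)/(2*p_h) ≤ (M:ℝ) := by
            have hfl := Nat.lt_floor_add_one ((t:ℝ)/(2*p_h))
            rw [hM]
            push_cast
            linarith
          have hclog : c * Real.log 3 ≤ c * (4/3) :=
            mul_le_mul_of_nonneg_left log3_le hc0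
          have hMp : (2*p'/3) * ((t:ℝ) + (t:ℝ)/(2*p_h)) ≤ (2*p'/3) * M :=
            mul_le_mul_of_nonneg_left hMge (by positivity)
          have hkey : c * (4/3) - (2*p'/3) * ((t:ℝ) + (t:ℝ)/(2*p_h))
              ≤ -((t : ℝ) * p' ^ 2) / (2 * p_h) := by
            rw [hc]
            have ht0 : (0:ℝ) ≤ (t:ℝ) := by linarith
            have e1 : (t:ℝ)*p'/(4*p_h)*(4/3) - 2*p'/3*((t:ℝ) + (t:ℝ)/(2*p_h))
                = -(2*(t:ℝ)*p'/3) := by field_simp; ring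
            rw [e1, neg_div, neg_le_neg_iff, div_le_div_iff₀ (by positivity) (by norm_num)]
            nlinarith [mul_le_mul_of_nonneg_left hp'ph (mul_nonneg ht0 hp'.le)]
          linarith
    calc μ {ω | (∑ i ∈ Finset.range (t + γ ω), (β i ω : ℝ)) ≤ c}
        ≤ μ (A ∪ B) := measure_mono hsub
    _ ≤ μ A + μ B := measure_union_le A B
    _ ≤ ENNReal.ofReal (Real.exp (-((t : ℝ) * p_h) / 6))
          + ENNReal.ofReal (Real.exp (-((t : ℝ) * p' ^ 2) / (2 * p_h))) :=
        add_le_add hAbound hBbound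
    _ = ENNReal.ofReal (Real.exp (-((t : ℝ) * p_h) / 6)
          + Real.exp (-((t : ℝ) * p' ^ 2) / (2 * p_h))) :=
        (ENNReal.ofReal_add (Real.exp_pos _).le (Real.exp_pos _).le).symm
  · -- second conjunct
    have h1 : Real.exp (-((t : ℝ) * p_h) / 6) ≤ Real.exp (-((t : ℝ) * p' ^ 2) / (6 * p_h)) := by
      apply Real.exp_le_exp.mpr
      rw [neg_div, neg_div, neg_le_neg_iff, div_le_div_iff₀ (by positivity) (by norm_num)]
      have ht0 : (0:ℝ) ≤ (t:ℝ) := by linarith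
      have hsq : p' * p' ≤ p_h * p_h := mul_le_mul hp'ph hp'ph hp'.le hph.le
      nlinarith [mul_le_mul_of_nonneg_left hsq ht0]
    have h2 : Real.exp (-((t : ℝ) * p' ^ 2) / (2 * p_h)) ≤ Real.exp (-((t : ℝ) * p' ^ 2) / (6 * p_h)) := by
      apply Real.exp_le_exp.mpr
      rw [neg_div, neg_div, neg_le_neg_iff, div_le_div_iff₀ (by positivity) (by positivity)]
      have ht0 : (0:ℝ) ≤ (t:ℝ) := by linarith
      nlinarith [mul_nonneg (mul_nonneg ht0 (sq_nonneg p')) hph.le]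
    linarith
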